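/- Fix a > 2, λ > 0, d ≥ 1 and u ∈ ℝ. Define the SCAD penalty P_λ : [0, ∞) → ℝ by P_λ(θ) = λθ for 0 ≤ θ ≤ λ; P_λ(θ) = (2aλθ − θ² − λ²)/(2(a − 1)) for λ < θ ≤ aλ; and P_λ(θ) = (a + 1)λ²/2 for θ > aλ. Then the function h(β) = dβ² − 2uβ + 2P_λ(|β|) attains its global minimum over β ∈ ℝ at β* given by: β* = sign(u)·(|u| − λ)₊/d when |u| ≤ (d + 1)λ; β* = sign(u)·((a − 1)|u| − aλ)/((a − 1)d − 1) when (d + 1)λ < |u| ≤ aλd; and β* = u/d when |u| > aλd. -/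

import Mathlib

set_option maxHeartbeats 1000000
set_option linter.unusedVariables false

private lemma mul_le_mul_cancel' {A x y : ℝ} (hA : 0 < A) (h : A * x ≤ A * y) : x ≤ y :=
  le_of_mul_le_mul_left h hA

private lemma abs_sign_mul (u w : ℝ) (hw : 0 ≤ w) (hw0 : u = 0 → w = 0) :
    |Real.sign u * w| = w := by
  rcases lt_trichotomy u 0 with h | h | h
  · rw [Real.sign_of_neg h]; rw [abs_mul, abs_neg, abs_one, one_mul, abs_of_nonneg hw]
  · rw [h, Real.sign_zero, zero_mul, abs_zero, hw0 h]
  · rw [Real.sign_of_pos h, one_mul, abs_of_nonneg hw]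

private lemma sign_mul_eq (u w : ℝ) : u * (Real.sign u * w) = |u| * w := by
  rcases lt_trichotomy u 0 with h | h | h
  · rw [Real.sign_of_neg h, abs_of_neg h]; ring
  · rw [h, abs_zero]; ring
  · rw [Real.sign_of_pos h, abs_of_pos h]; ring

private lemma scad_l11 (a lam d v t : ℝ) (ha : 2 < a) (hlam : 0 < lam) (hd : 1 ≤ d)
    (hv : 0 ≤ v) (ht : 0 ≤ t) (hvl : v ≤ lam) :
    0 ≤ (a - 1) * d * ((a - 1) * d - 1) * (d * t ^ 2 - 2 * v * t + 2 * (lam * t)) := by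
  have hd0 : (0:ℝ) < d := by linarith
  have ha1 : (0:ℝ) < a - 1 := by linarith
  have hc : (0:ℝ) < (a - 1) * d - 1 := by nlinarith
  have hApos : (0:ℝ) < (a - 1) * d * ((a - 1) * d - 1) := mul_pos (mul_pos ha1 hd0) hc
  nlinarith [mul_nonneg hApos.le (mul_nonneg ht (by linarith : (0:ℝ) ≤ lam - v)),
    mul_nonneg hApos.le (mul_nonneg hd0.le (sq_nonneg t))]

private lemma scad_l12 (a lam d v t : ℝ) (ha : 2 < a) (hlam : 0 < lam) (hd : 1 ≤ d)
    (hv : 0 ≤ v) (ht : 0 ≤ t) (hvl : v ≤ lam) (htl : lam ≤ t) (hta : t ≤ a * lam) :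
    0 ≤ ((a - 1) * d - 1) * d *
      ((a - 1) * (d * t ^ 2 - 2 * v * t) + (2 * a * lam * t - t ^ 2 - lam ^ 2)) := by
  have hd0 : (0:ℝ) < d := by linarith
  have ha1 : (0:ℝ) < a - 1 := by linarith
  have hc : (0:ℝ) < (a - 1) * d - 1 := by nlinarith
  nlinarith [mul_nonneg (mul_nonneg (mul_nonneg hd0.le hc.le) (mul_nonneg hc.le ht))
      (by linarith : (0:ℝ) ≤ t - lam),
    mul_nonneg (mul_nonneg hd0.le hc.le) (mul_nonneg (mul_nonneg hc.le hlam.le) ht),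
    mul_nonneg (mul_nonneg hd0.le hc.le) (mul_nonneg hlam.le (by linarith : (0:ℝ) ≤ t - lam)),
    mul_pos (mul_pos hd0 hc) (mul_pos hlam hlam),
    mul_nonneg (mul_nonneg hd0.le hc.le)
      (mul_nonneg (mul_nonneg ha1.le ht) (by linarith : (0:ℝ) ≤ lam - v))]

private lemma scad_l13 (a lam d v t : ℝ) (ha : 2 < a) (hlam : 0 < lam) (hd : 1 ≤ d)
    (hv : 0 ≤ v) (ht : 0 ≤ t) (hvl : v ≤ lam) (hta : a * lam ≤ t) :
    0 ≤ (a - 1) * d * ((a - 1) * d - 1) * (d * t ^ 2 - 2 * v * t + 2 * ((a + 1) * lam ^ 2 / 2)) := by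
  have hd0 : (0:ℝ) < d := by linarith
  have ha1 : (0:ℝ) < a - 1 := by linarith
  have hc : (0:ℝ) < (a - 1) * d - 1 := by nlinarith
  have hApos : (0:ℝ) < (a - 1) * d * ((a - 1) * d - 1) := mul_pos (mul_pos ha1 hd0) hc
  nlinarith [mul_nonneg hApos.le (sq_nonneg (t - lam)),
    mul_nonneg hApos.le (mul_nonneg ht (by linarith : (0:ℝ) ≤ lam - v)),
    mul_nonneg hApos.le (mul_nonneg (by linarith : (0:ℝ) ≤ d - 1) (sq_nonneg t)),
    mul_nonneg hApos.le (mul_nonneg (by linarith : (0:ℝ) ≤ a) (mul_nonneg hlam.le hlam.le))]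

private lemma scad_l21 (a lam d v t : ℝ) (ha : 2 < a) (hlam : 0 < lam) (hd : 1 ≤ d)
    (hv : 0 ≤ v) (ht : 0 ≤ t) (hvl : lam < v) (h1 : v ≤ (d + 1) * lam) (htl : t ≤ lam) :
    -((a - 1) * ((a - 1) * d - 1) * (v - lam) ^ 2) ≤
      (a - 1) * d * ((a - 1) * d - 1) * (d * t ^ 2 - 2 * v * t + 2 * (lam * t)) := by
  have hd0 : (0:ℝ) < d := by linarith
  have ha1 : (0:ℝ) < a - 1 := by linarith
  have hc : (0:ℝ) < (a - 1) * d - 1 := by nlinarith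
  nlinarith [mul_nonneg (mul_nonneg ha1.le hc.le) (sq_nonneg (d * t - v + lam))]

private lemma scad_l22 (a lam d v t : ℝ) (ha : 2 < a) (hlam : 0 < lam) (hd : 1 ≤ d)
    (hv : 0 ≤ v) (ht : 0 ≤ t) (hvl : lam < v) (h1 : v ≤ (d + 1) * lam)
    (htl : lam ≤ t) (hta : t ≤ a * lam) :
    -((a - 1) * ((a - 1) * d - 1) * (v - lam) ^ 2) ≤
      ((a - 1) * d - 1) * d *
        ((a - 1) * (d * t ^ 2 - 2 * v * t) + (2 * a * lam * t - t ^ 2 - lam ^ 2)) := by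
  have hd0 : (0:ℝ) < d := by linarith
  have ha1 : (0:ℝ) < a - 1 := by linarith
  have hc : (0:ℝ) < (a - 1) * d - 1 := by nlinarith
  nlinarith [mul_nonneg (mul_nonneg hc.le (mul_nonneg hd0.le hc.le)) (sq_nonneg (t - lam)),
    mul_nonneg (mul_nonneg (mul_nonneg hc.le (mul_nonneg hd0.le ha1.le))
      (by linarith : (0:ℝ) ≤ t - lam)) (by linarith : (0:ℝ) ≤ (d + 1) * lam - v),
    mul_nonneg (mul_nonneg hc.le ha1.le) (sq_nonneg (d * lam - v + lam))]

private lemma scad_l23 (a lam d v t : ℝ) (ha : 2 < a) (hlam : 0 < lam) (hd : 1 ≤ d)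
    (hv : 0 ≤ v) (ht : 0 ≤ t) (hvl : lam < v) (h1 : v ≤ (d + 1) * lam)
    (hta : a * lam ≤ t) :
    -((a - 1) * ((a - 1) * d - 1) * (v - lam) ^ 2) ≤
      (a - 1) * d * ((a - 1) * d - 1) *
        (d * t ^ 2 - 2 * v * t + 2 * ((a + 1) * lam ^ 2 / 2)) := by
  have hd0 : (0:ℝ) < d := by linarith
  have ha1 : (0:ℝ) < a - 1 := by linarith
  have hc : (0:ℝ) < (a - 1) * d - 1 := by nlinarith
  nlinarith [mul_nonneg (mul_nonneg hc.le ha1.le)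
      (mul_nonneg (mul_nonneg hd0.le hd0.le) (sq_nonneg (t - a * lam))),
    mul_nonneg (mul_nonneg (mul_nonneg hc.le ha1.le) (mul_nonneg hd0.le hlam.le))
      (mul_nonneg hc.le (by linarith : (0:ℝ) ≤ t - a * lam)),
    mul_nonneg (mul_nonneg (mul_nonneg hc.le ha1.le) (mul_nonneg hd0.le
      (by linarith : (0:ℝ) ≤ t - a * lam))) (by linarith : (0:ℝ) ≤ (d + 1) * lam - v),
    mul_nonneg (mul_nonneg hc.le (mul_nonneg hd0.le hc.le)) (sq_nonneg (a * lam - lam)),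
    mul_nonneg (mul_nonneg (mul_nonneg hc.le (mul_nonneg hd0.le ha1.le))
      (by nlinarith : (0:ℝ) ≤ a * lam - lam)) (by linarith : (0:ℝ) ≤ (d + 1) * lam - v),
    mul_nonneg (mul_nonneg hc.le ha1.le) (sq_nonneg (d * lam - v + lam))]

private lemma scad_l31 (a lam d v t : ℝ) (ha : 2 < a) (hlam : 0 < lam) (hd : 1 ≤ d)
    (hv : 0 ≤ v) (ht : 0 ≤ t) (h1 : (d + 1) * lam < v) (h2 : v ≤ a * lam * d)
    (htl : t ≤ lam) :
    -(d * (((a - 1) * v - a * lam) ^ 2 + ((a - 1) * d - 1) * lam ^ 2)) ≤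
      (a - 1) * d * ((a - 1) * d - 1) * (d * t ^ 2 - 2 * v * t + 2 * (lam * t)) := by
  have hd0 : (0:ℝ) < d := by linarith
  have ha1 : (0:ℝ) < a - 1 := by linarith
  have hc : (0:ℝ) < (a - 1) * d - 1 := by nlinarith
  nlinarith [mul_nonneg (mul_nonneg hd0.le (mul_nonneg hc.le ha1.le))
      (mul_nonneg (by linarith : (0:ℝ) ≤ lam - t) (by linarith : (0:ℝ) ≤ v - (d + 1) * lam)),
    mul_nonneg (mul_nonneg hd0.le (mul_nonneg hc.le (mul_nonneg ha1.le hd0.le)))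
      (sq_nonneg (lam - t)),
    mul_nonneg hd0.le (sq_nonneg (((a - 1) * d - 1) * lam - ((a - 1) * v - a * lam)))]

private lemma scad_l32 (a lam d v t : ℝ) (ha : 2 < a) (hlam : 0 < lam) (hd : 1 ≤ d)
    (hv : 0 ≤ v) (ht : 0 ≤ t) (h1 : (d + 1) * lam < v) (h2 : v ≤ a * lam * d)
    (htl : lam ≤ t) (hta : t ≤ a * lam) :
    -(d * (((a - 1) * v - a * lam) ^ 2 + ((a - 1) * d - 1) * lam ^ 2)) ≤
      ((a - 1) * d - 1) * d *
        ((a - 1) * (d * t ^ 2 - 2 * v * t) + (2 * a * lam * t - t ^ 2 - lam ^ 2)) := by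
  have hd0 : (0:ℝ) < d := by linarith
  nlinarith [mul_nonneg hd0.le (sq_nonneg (((a - 1) * d - 1) * t - ((a - 1) * v - a * lam)))]

private lemma scad_l33 (a lam d v t : ℝ) (ha : 2 < a) (hlam : 0 < lam) (hd : 1 ≤ d)
    (hv : 0 ≤ v) (ht : 0 ≤ t) (h1 : (d + 1) * lam < v) (h2 : v ≤ a * lam * d)
    (hta : a * lam ≤ t) :
    -(d * (((a - 1) * v - a * lam) ^ 2 + ((a - 1) * d - 1) * lam ^ 2)) ≤
      (a - 1) * d * ((a - 1) * d - 1) *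
        (d * t ^ 2 - 2 * v * t + 2 * ((a + 1) * lam ^ 2 / 2)) := by
  have hd0 : (0:ℝ) < d := by linarith
  have ha1 : (0:ℝ) < a - 1 := by linarith
  have hc : (0:ℝ) < (a - 1) * d - 1 := by nlinarith
  nlinarith [mul_nonneg (mul_nonneg hd0.le (mul_nonneg ha1.le hc.le))
      (mul_nonneg hd0.le (sq_nonneg (t - a * lam))),
    mul_nonneg (mul_nonneg hd0.le (mul_nonneg ha1.le hc.le))
      (mul_nonneg (by linarith : (0:ℝ) ≤ t - a * lam)
        (by nlinarith : (0:ℝ) ≤ d * a * lam - v)),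
    mul_nonneg hd0.le (sq_nonneg (((a - 1) * d - 1) * (a * lam) - ((a - 1) * v - a * lam)))]

private lemma scad_l41 (a lam d v t : ℝ) (ha : 2 < a) (hlam : 0 < lam) (hd : 1 ≤ d)
    (hv : 0 ≤ v) (ht : 0 ≤ t) (h2 : a * lam * d < v) (htl : t ≤ lam) :
    (a - 1) * ((a - 1) * d - 1) * (-(v ^ 2) + (a + 1) * d * lam ^ 2) ≤
      (a - 1) * d * ((a - 1) * d - 1) * (d * t ^ 2 - 2 * v * t + 2 * (lam * t)) := by
  have hd0 : (0:ℝ) < d := by linarith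
  have ha1 : (0:ℝ) < a - 1 := by linarith
  have hc : (0:ℝ) < (a - 1) * d - 1 := by nlinarith
  have hda : (d + 1) * lam ≤ a * lam * d := by nlinarith
  nlinarith [mul_nonneg (mul_nonneg hc.le (mul_nonneg ha1.le (mul_nonneg hd0.le hd0.le)))
      (sq_nonneg (lam - t)),
    mul_nonneg (mul_nonneg (mul_nonneg hc.le (mul_nonneg ha1.le hd0.le))
      (by linarith : (0:ℝ) ≤ lam - t)) (by linarith : (0:ℝ) ≤ v - (d + 1) * lam),
    mul_nonneg (mul_nonneg hc.le (mul_nonneg hd0.le hc.le)) (sq_nonneg (a * lam - lam)),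
    mul_nonneg (mul_nonneg (mul_nonneg hc.le (mul_nonneg hd0.le ha1.le))
      (by nlinarith : (0:ℝ) ≤ a * lam - lam)) (by linarith : (0:ℝ) ≤ v - a * lam * d),
    mul_nonneg (mul_nonneg hc.le ha1.le) (sq_nonneg (a * d * lam - v))]

private lemma scad_l42 (a lam d v t : ℝ) (ha : 2 < a) (hlam : 0 < lam) (hd : 1 ≤ d)
    (hv : 0 ≤ v) (ht : 0 ≤ t) (h2 : a * lam * d < v) (htl : lam ≤ t) (hta : t ≤ a * lam) :
    (a - 1) * ((a - 1) * d - 1) * (-(v ^ 2) + (a + 1) * d * lam ^ 2) ≤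
      ((a - 1) * d - 1) * d *
        ((a - 1) * (d * t ^ 2 - 2 * v * t) + (2 * a * lam * t - t ^ 2 - lam ^ 2)) := by
  have hd0 : (0:ℝ) < d := by linarith
  have ha1 : (0:ℝ) < a - 1 := by linarith
  have hc : (0:ℝ) < (a - 1) * d - 1 := by nlinarith
  nlinarith [mul_nonneg (mul_nonneg hc.le (mul_nonneg hd0.le hc.le))
      (sq_nonneg (a * lam - t)),
    mul_nonneg (mul_nonneg (mul_nonneg hc.le (mul_nonneg hd0.le ha1.le))
      (by linarith : (0:ℝ) ≤ a * lam - t)) (by nlinarith : (0:ℝ) ≤ v - a * d * lam),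
    mul_nonneg (mul_nonneg hc.le ha1.le) (sq_nonneg (a * d * lam - v))]

private lemma scad_l43 (a lam d v t : ℝ) (ha : 2 < a) (hlam : 0 < lam) (hd : 1 ≤ d)
    (hv : 0 ≤ v) (ht : 0 ≤ t) (h2 : a * lam * d < v) (hta : a * lam ≤ t) :
    (a - 1) * ((a - 1) * d - 1) * (-(v ^ 2) + (a + 1) * d * lam ^ 2) ≤
      (a - 1) * d * ((a - 1) * d - 1) *
        (d * t ^ 2 - 2 * v * t + 2 * ((a + 1) * lam ^ 2 / 2)) := by
  have hd0 : (0:ℝ) < d := by linarith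
  have ha1 : (0:ℝ) < a - 1 := by linarith
  have hc : (0:ℝ) < (a - 1) * d - 1 := by nlinarith
  nlinarith [mul_nonneg (mul_nonneg ha1.le hc.le) (sq_nonneg (d * t - v))]

private lemma scad_key (a lam d v s t : ℝ) (ha : 2 < a) (hlam : 0 < lam)
    (hd : 1 ≤ d) (hv : 0 ≤ v) (ht : 0 ≤ t)
    (P : ℝ → ℝ)
    (hP : ∀ θ : ℝ, 0 ≤ θ → P θ =
      if θ ≤ lam then lam * θ
      else if θ ≤ a * lam then (2 * a * lam * θ - θ ^ 2 - lam ^ 2) / (2 * (a - 1))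
      else (a + 1) * lam ^ 2 / 2)
    (hs : s = if v ≤ (d + 1) * lam then max (v - lam) 0 / d
      else if v ≤ a * lam * d then ((a - 1) * v - a * lam) / ((a - 1) * d - 1)
      else v / d) :
    d * s ^ 2 - 2 * v * s + 2 * P s ≤ d * t ^ 2 - 2 * v * t + 2 * P t := by
  have hd0 : (0:ℝ) < d := by linarith
  have ha1 : (0:ℝ) < a - 1 := by linarith
  have hc : (0:ℝ) < (a - 1) * d - 1 := by nlinarith
  have hApos : (0:ℝ) < (a - 1) * d * ((a - 1) * d - 1) :=
    mul_pos (mul_pos ha1 hd0) hc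
  have hgt2 : (a - 1) * d * ((a - 1) * d - 1) *
      (d * t ^ 2 - 2 * v * t + 2 * ((2 * a * lam * t - t ^ 2 - lam ^ 2) / (2 * (a - 1)))) =
      ((a - 1) * d - 1) * d *
      ((a - 1) * (d * t ^ 2 - 2 * v * t) + (2 * a * lam * t - t ^ 2 - lam ^ 2)) := by
    field_simp
  refine mul_le_mul_cancel' hApos ?_
  by_cases h1 : v ≤ (d + 1) * lam
  · rw [if_pos h1] at hs
    by_cases hvl : v ≤ lam
    · -- s = 0
      have hs0 : s = 0 := by rw [hs, max_eq_right (by linarith), zero_div]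
      have hgs : (a - 1) * d * ((a - 1) * d - 1) * (d * s ^ 2 - 2 * v * s + 2 * P s) = 0 := by
        rw [hs0, hP 0 le_rfl, if_pos hlam.le]; ring
      rw [hgs, hP t ht]
      by_cases htl : t ≤ lam
      · rw [if_pos htl]
        exact scad_l11 a lam d v t ha hlam hd hv ht hvl
      · rw [if_neg htl]
        have htl' : lam ≤ t := by linarith [not_le.1 htl]
        by_cases hta : t ≤ a * lam
        · rw [if_pos hta, hgt2]
          exact scad_l12 a lam d v t ha hlam hd hv ht hvl htl' hta
        · rw [if_neg hta]
          exact scad_l13 a lam d v t ha hlam hd hv ht hvl (by linarith [not_le.1 hta])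
    · -- lam < v ≤ (d+1) lam, s = (v - lam)/d
      have hvl' : lam < v := not_le.1 hvl
      have hs' : s = (v - lam) / d := by rw [hs, max_eq_left (by linarith)]
      have hs0 : 0 ≤ s := by rw [hs']; exact div_nonneg (by linarith) hd0.le
      have hsl : s ≤ lam := by
        rw [hs', div_le_iff₀ hd0]; nlinarith
      have hgs : (a - 1) * d * ((a - 1) * d - 1) * (d * s ^ 2 - 2 * v * s + 2 * P s) =
          -((a - 1) * ((a - 1) * d - 1) * (v - lam) ^ 2) := by
        rw [hP s hs0, if_pos hsl, hs']
        field_simp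
        ring
      rw [hgs, hP t ht]
      by_cases htl : t ≤ lam
      · rw [if_pos htl]
        exact scad_l21 a lam d v t ha hlam hd hv ht hvl' h1 htl
      · rw [if_neg htl]
        have htl' : lam ≤ t := by linarith [not_le.1 htl]
        by_cases hta : t ≤ a * lam
        · rw [if_pos hta, hgt2]
          exact scad_l22 a lam d v t ha hlam hd hv ht hvl' h1 htl' hta
        · rw [if_neg hta]
          exact scad_l23 a lam d v t ha hlam hd hv ht hvl' h1 (by linarith [not_le.1 hta])
  · rw [if_neg h1] at hs
    have h1' : (d + 1) * lam < v := not_le.1 h1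
    by_cases h2 : v ≤ a * lam * d
    · rw [if_pos h2] at hs
      have hK : 0 ≤ (a - 1) * v - a * lam := by nlinarith
      have hs0 : 0 ≤ s := by rw [hs]; exact div_nonneg hK hc.le
      have hsl : lam < s := by rw [hs, lt_div_iff₀ hc]; nlinarith
      have hsa : s ≤ a * lam := by rw [hs, div_le_iff₀ hc]; nlinarith
      have hgs : (a - 1) * d * ((a - 1) * d - 1) * (d * s ^ 2 - 2 * v * s + 2 * P s) =
          -(d * (((a - 1) * v - a * lam) ^ 2 + ((a - 1) * d - 1) * lam ^ 2)) := by
        rw [hP s hs0, if_neg (not_le.2 hsl), if_pos hsa, hs]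
        field_simp
        ring
      rw [hgs, hP t ht]
      by_cases htl : t ≤ lam
      · rw [if_pos htl]
        exact scad_l31 a lam d v t ha hlam hd hv ht h1' h2 htl
      · rw [if_neg htl]
        have htl' : lam ≤ t := by linarith [not_le.1 htl]
        by_cases hta : t ≤ a * lam
        · rw [if_pos hta, hgt2]
          exact scad_l32 a lam d v t ha hlam hd hv ht h1' h2 htl' hta
        · rw [if_neg hta]
          exact scad_l33 a lam d v t ha hlam hd hv ht h1' h2 (by linarith [not_le.1 hta])
    · rw [if_neg h2] at hs
      have h2' : a * lam * d < v := not_le.1 h2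
      have hs0 : 0 ≤ s := by rw [hs]; exact div_nonneg (by nlinarith) hd0.le
      have hsa : a * lam < s := by rw [hs, lt_div_iff₀ hd0]; nlinarith
      have hsl : ¬ s ≤ lam := by push_neg; nlinarith
      have hgs : (a - 1) * d * ((a - 1) * d - 1) * (d * s ^ 2 - 2 * v * s + 2 * P s) =
          (a - 1) * ((a - 1) * d - 1) * (-(v ^ 2) + (a + 1) * d * lam ^ 2) := by
        rw [hP s hs0, if_neg hsl, if_neg (not_le.2 hsa), hs]
        field_simp
        ring
      rw [hgs, hP t ht]
      by_cases htl : t ≤ lam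
      · rw [if_pos htl]
        exact scad_l41 a lam d v t ha hlam hd hv ht h2' htl
      · rw [if_neg htl]
        have htl' : lam ≤ t := by linarith [not_le.1 htl]
        by_cases hta : t ≤ a * lam
        · rw [if_pos hta, hgt2]
          exact scad_l42 a lam d v t ha hlam hd hv ht h2' htl' hta
        · rw [if_neg hta]
          exact scad_l43 a lam d v t ha hlam hd hv ht h2' (by linarith [not_le.1 hta])

/-- closed-form SCAD thresholding.
Fix `a > 2`, `λ > 0`, `d ≥ 1` and `u ∈ ℝ`.  With the SCAD penalty `P_λ`,
the function `h(β) = dβ² − 2uβ + 2P_λ(|β|)` attains its global minimum over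
`β ∈ ℝ` at the point `β*` given by the three-branch SCAD update formula. -/
theorem stmt14 (a lam d u : ℝ) (ha : 2 < a) (hlam : 0 < lam) (hd : 1 ≤ d)
    (P : ℝ → ℝ)
    (hP : ∀ θ : ℝ, 0 ≤ θ → P θ =
      if θ ≤ lam then lam * θ
      else if θ ≤ a * lam then (2 * a * lam * θ - θ ^ 2 - lam ^ 2) / (2 * (a - 1))
      else (a + 1) * lam ^ 2 / 2)
    (βstar : ℝ)
    (hβstar : βstar =
      if |u| ≤ (d + 1) * lam then Real.sign u * (max (|u| - lam) 0 / d)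
      else if |u| ≤ a * lam * d then
        Real.sign u * (((a - 1) * |u| - a * lam) / ((a - 1) * d - 1))
      else u / d) :
    ∀ β : ℝ, d * βstar ^ 2 - 2 * u * βstar + 2 * P |βstar|
      ≤ d * β ^ 2 - 2 * u * β + 2 * P |β| := by
  have hd0 : (0:ℝ) < d := by linarith
  have ha1 : (0:ℝ) < a - 1 := by linarith
  have hc : (0:ℝ) < (a - 1) * d - 1 := by nlinarith
  have key : |βstar| = (if |u| ≤ (d + 1) * lam then max (|u| - lam) 0 / d
      else if |u| ≤ a * lam * d then ((a - 1) * |u| - a * lam) / ((a - 1) * d - 1)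
      else |u| / d) ∧ u * βstar = |u| * |βstar| := by
    by_cases hb1 : |u| ≤ (d + 1) * lam
    · rw [if_pos hb1] at hβstar ⊢
      have hw : 0 ≤ max (|u| - lam) 0 / d := by positivity
      have hw0 : u = 0 → max (|u| - lam) 0 / d = 0 := by
        intro h0
        rw [h0, abs_zero, max_eq_right (by linarith), zero_div]
      have habs : |βstar| = max (|u| - lam) 0 / d := by
        rw [hβstar]; exact abs_sign_mul u _ hw hw0
      refine ⟨habs, ?_⟩
      conv_lhs => rw [hβstar]
      rw [sign_mul_eq, habs]
    · rw [if_neg hb1] at hβstar ⊢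
      have hb1' : (d + 1) * lam < |u| := not_le.1 hb1
      by_cases hb2 : |u| ≤ a * lam * d
      · rw [if_pos hb2] at hβstar ⊢
        have hK : 0 ≤ ((a - 1) * |u| - a * lam) / ((a - 1) * d - 1) := by
          apply div_nonneg _ hc.le
          nlinarith
        have habs : |βstar| = ((a - 1) * |u| - a * lam) / ((a - 1) * d - 1) := by
          rw [hβstar]
          exact abs_sign_mul u _ hK (by intro h0; rw [h0, abs_zero] at hb1'; nlinarith)
        refine ⟨habs, ?_⟩
        conv_lhs => rw [hβstar]
        rw [sign_mul_eq, habs]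
      · rw [if_neg hb2] at hβstar ⊢
        have habs : |βstar| = |u| / d := by
          rw [hβstar, abs_div, abs_of_pos hd0]
        refine ⟨habs, ?_⟩
        conv_lhs => rw [hβstar]
        rw [habs, mul_div_assoc', mul_div_assoc', abs_mul_abs_self]
  obtain ⟨habs, hmul⟩ := key
  intro β
  have h1 : d * βstar ^ 2 - 2 * u * βstar + 2 * P |βstar|
      = d * |βstar| ^ 2 - 2 * |u| * |βstar| + 2 * P |βstar| := by
    rw [sq_abs]
    linear_combination (-2 : ℝ) * hmul
  have h2 := scad_key a lam d |u| |βstar| |β| ha hlam hd (abs_nonneg u) (abs_nonneg β) P hP habs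
  have h3 : u * β ≤ |u| * |β| := by
    rw [← abs_mul]; exact le_abs_self _
  rw [h1]
  refine h2.trans ?_
  rw [sq_abs]
  linarith
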